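/- Let H be a Hermitian matrix, {P_j} a finite family of pairwise orthogonal Hermitian projections with Σ_j P_j = 1 and H·P_j = E_j·P_j with E_j real, let β be real, and set ρ := exp(−βH)/tr(exp(−βH)) (the Gibbs state). If a linear map L on matrices satisfies detailed balance with respect to ρ, then for all indices i, j and all real t: exp(−β·E_j) · tr(P_j · exp(tL)(P_i)) = exp(−β·E_i) · tr(P_i · exp(tL)(P_j)). -/

import Mathlib

open Matrix

/-- The exponential `exp (t • L)` of the linear map `t • L` on matrices, applied to a matrix `A`;
it is given by the usual exponential power series `∑ (t • L)^k A / k!`. -/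
noncomputable def expSemigroup {n : Type*} [Fintype n] [DecidableEq n]
    (L : Module.End ℂ (Matrix n n ℂ)) (t : ℝ) (A : Matrix n n ℂ) : Matrix n n ℂ :=
  ∑' k : ℕ, (k.factorial : ℂ)⁻¹ • (((t : ℂ) • L) ^ k) A

section Aux

attribute [local instance] Matrix.linftyOpNormedRing Matrix.linftyOpNormedAlgebra

variable {n : Type*} [Fintype n] [DecidableEq n]

theorem exp_mul_proj (A P : Matrix n n ℂ) (c : ℂ) (h : A * P = c • P) :
    NormedSpace.exp A * P = Complex.exp c • P := by
  have hk : ∀ k : ℕ, A ^ k * P = c ^ k • P := by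
    intro k; induction k with
    | zero => simp
    | succ k ih => rw [pow_succ, pow_succ, mul_assoc, h, mul_smul_comm, ih, smul_smul, mul_comm]
  rw [NormedSpace.exp_eq_tsum ℂ]
  show (∑' k : ℕ, (k.factorial : ℂ)⁻¹ • A ^ k) * P = _
  erw [← (NormedSpace.expSeries_summable' (𝕂 := ℂ) A).tsum_mul_right P]
  have : ∀ k : ℕ, ((k.factorial : ℂ))⁻¹ • A ^ k * P = ((k.factorial : ℂ)⁻¹ • c ^ k) • P := by
    intro k; rw [smul_mul_assoc, hk, smul_smul, smul_eq_mul]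
  simp_rw [this]
  rw [Summable.tsum_smul_const (NormedSpace.expSeries_summable' (𝕂 := ℂ) c)]
  congr 1
  rw [Complex.exp_eq_exp_ℂ, NormedSpace.exp_eq_tsum ℂ]

theorem proj_mul_exp (A P : Matrix n n ℂ) (c : ℂ) (h : P * A = c • P) :
    P * NormedSpace.exp A = Complex.exp c • P := by
  have hk : ∀ k : ℕ, P * A ^ k = c ^ k • P := by
    intro k; induction k with
    | zero => simp
    | succ k ih =>
      rw [pow_succ, pow_succ, ← mul_assoc, ih, smul_mul_assoc, h, smul_smul, mul_comm]
  rw [NormedSpace.exp_eq_tsum ℂ]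
  show P * (∑' k : ℕ, (k.factorial : ℂ)⁻¹ • A ^ k) = _
  erw [← (NormedSpace.expSeries_summable' (𝕂 := ℂ) A).tsum_mul_left P]
  have : ∀ k : ℕ, P * (((k.factorial : ℂ))⁻¹ • A ^ k) = ((k.factorial : ℂ)⁻¹ • c ^ k) • P := by
    intro k; rw [mul_smul_comm, hk, smul_smul, smul_eq_mul]
  simp_rw [this]
  rw [Summable.tsum_smul_const (NormedSpace.expSeries_summable' (𝕂 := ℂ) c)]
  congr 1
  rw [Complex.exp_eq_exp_ℂ, NormedSpace.exp_eq_tsum ℂ]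

theorem expSemigroup_summable (L : Module.End ℂ (Matrix n n ℂ)) (t : ℝ) (A : Matrix n n ℂ) :
    Summable fun k : ℕ => (k.factorial : ℂ)⁻¹ • (((t : ℂ) • L) ^ k) A := by
  set M := (t : ℂ) • L with hM
  obtain ⟨C, hC0, hT⟩ := SemilinearMapClass.bound_of_continuous (M : Matrix n n ℂ →ₗ[ℂ] Matrix n n ℂ)
    (LinearMap.continuous_of_finiteDimensional _)
  have hb : ∀ (k : ℕ) (X : Matrix n n ℂ), ‖(M ^ k) X‖ ≤ C ^ k * ‖X‖ := by
    intro k; induction k with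
    | zero => intro X; simp
    | succ k ih =>
      intro X
      have h1 : (M ^ (k + 1)) X = (M ^ k) (M X) := by rw [pow_succ, Module.End.mul_apply]
      rw [h1]
      calc ‖(M ^ k) (M X)‖ ≤ C ^ k * ‖M X‖ := ih (M X)
        _ ≤ C ^ k * (C * ‖X‖) := by
            exact mul_le_mul_of_nonneg_left (hT X) (pow_nonneg hC0.le k)
        _ = C ^ (k + 1) * ‖X‖ := by rw [pow_succ]; ring
  apply Summable.of_norm
  have hs : Summable (fun k : ℕ => (k.factorial : ℝ)⁻¹ * (C ^ k * ‖A‖)) := by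
    have := (Real.summable_pow_div_factorial C).mul_right ‖A‖
    refine this.congr fun k => ?_
    rw [div_eq_mul_inv]; ring
  refine Summable.of_nonneg_of_le (fun k => norm_nonneg _) (fun k => ?_) hs
  rw [norm_smul, norm_inv, Complex.norm_natCast]
  exact mul_le_mul_of_nonneg_left (hb k A) (by positivity)

theorem trace_mul_tsum_mul (ρ B : Matrix n n ℂ) (f : ℕ → Matrix n n ℂ) (hf : Summable f) :
    (ρ * (∑' k, f k) * B).trace = ∑' k, (ρ * f k * B).trace := by
  let g : Matrix n n ℂ →ₗ[ℂ] ℂ :=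
    (Matrix.traceLinearMap n ℂ ℂ).comp ((LinearMap.mulRight ℂ B).comp (LinearMap.mulLeft ℂ ρ))
  have hc := (LinearMap.toContinuousLinearMap g).map_tsum hf
  simpa [g] using hc

theorem trace_mul_tsum (C : Matrix n n ℂ) (f : ℕ → Matrix n n ℂ) (hf : Summable f) :
    (C * ∑' k, f k).trace = ∑' k, (C * f k).trace := by
  let g : Matrix n n ℂ →ₗ[ℂ] ℂ :=
    (Matrix.traceLinearMap n ℂ ℂ).comp (LinearMap.mulLeft ℂ C)
  have hc := (LinearMap.toContinuousLinearMap g).map_tsum hf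
  simpa [g] using hc

theorem expSemigroup_db (ρ : Matrix n n ℂ) (L : Module.End ℂ (Matrix n n ℂ))
    (hdb : ∀ A B : Matrix n n ℂ, (ρ * L A * B).trace = (ρ * A * L B).trace)
    (t : ℝ) (A B : Matrix n n ℂ) :
    (ρ * expSemigroup L t A * B).trace = (ρ * A * expSemigroup L t B).trace := by
  set M := (t : ℂ) • L with hM
  have hdb1 : ∀ X Y : Matrix n n ℂ, (ρ * M X * Y).trace = (ρ * X * M Y).trace := by
    intro X Y
    rw [show M X = (t : ℂ) • L X from rfl, show M Y = (t : ℂ) • L Y from rfl,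
      Matrix.mul_smul, Matrix.smul_mul, Matrix.trace_smul, Matrix.mul_smul, Matrix.trace_smul,
      hdb]
  have hdbk : ∀ (k : ℕ) (X Y : Matrix n n ℂ),
      (ρ * (M ^ k) X * Y).trace = (ρ * X * (M ^ k) Y).trace := by
    intro k; induction k with
    | zero => intro X Y; simp
    | succ k ih =>
      intro X Y
      rw [show (M ^ (k + 1)) X = M ((M ^ k) X) from by rw [pow_succ', Module.End.mul_apply],
        hdb1, ih, show (M ^ k) (M Y) = (M ^ (k + 1)) Y from by rw [pow_succ, Module.End.mul_apply]]
  show (ρ * (∑' k : ℕ, (k.factorial : ℂ)⁻¹ • (M ^ k) A) * B).trace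
      = (ρ * A * ∑' k : ℕ, (k.factorial : ℂ)⁻¹ • (M ^ k) B).trace
  rw [trace_mul_tsum_mul ρ B _ (expSemigroup_summable L t A),
    trace_mul_tsum (ρ * A) _ (expSemigroup_summable L t B)]
  refine tsum_congr fun k => ?_
  rw [Matrix.mul_smul, Matrix.smul_mul, Matrix.trace_smul, Matrix.mul_smul, Matrix.trace_smul,
    hdbk]

end Aux

/-- For the Gibbs state `ρ = exp(−βH)/tr(exp(−βH))` of a Hermitian Hamiltonian `H` with
spectral projections `P j` and eigenvalues `E j`, detailed balance of a linear map `L` with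
respect to `ρ` implies the classical Gibbs detailed-balance relation
`exp(−βE_j)·tr(P j · exp(tL)(P i)) = exp(−βE_i)·tr(P i · exp(tL)(P j))`. -/
theorem gibbs_detailed_balance
    {n : Type*} [Fintype n] [DecidableEq n] [Nonempty n]
    {ι : Type*} [Fintype ι]
    (H : Matrix n n ℂ) (hH : Hᴴ = H)
    (P : ι → Matrix n n ℂ) (E : ι → ℝ)
    (hproj : ∀ j, P j * P j = P j)
    (hherm : ∀ j, (P j)ᴴ = P j)
    (horth : ∀ j k, j ≠ k → P j * P k = 0)
    (hsum : ∑ j, P j = 1)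
    (heig : ∀ j, H * P j = (E j : ℂ) • P j)
    (β : ℝ)
    (ρ : Matrix n n ℂ)
    (hρ : ρ = ((NormedSpace.exp (-(β : ℂ) • H)).trace)⁻¹ • NormedSpace.exp (-(β : ℂ) • H))
    (L : Module.End ℂ (Matrix n n ℂ))
    (hdb : ∀ A B : Matrix n n ℂ, (ρ * L A * B).trace = (ρ * A * L B).trace) :
    ∀ (i j : ι) (t : ℝ),
      (Real.exp (-(β * E j)) : ℂ) * (P j * expSemigroup L t (P i)).trace
        = (Real.exp (-(β * E i)) : ℂ) * (P i * expSemigroup L t (P j)).trace := by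
  intro i j t
  -- P also "eigen" from the left
  have hPH : ∀ k, P k * H = (E k : ℂ) • P k := by
    intro k
    have h := congrArg conjTranspose (heig k)
    rwa [conjTranspose_mul, hH, hherm, conjTranspose_smul, Complex.star_def,
      Complex.conj_ofReal, hherm] at h
  set A := -(β : ℂ) • H with hA
  have hAP : ∀ k, A * P k = ((-(β * E k) : ℝ) : ℂ) • P k := by
    intro k
    rw [hA, Matrix.smul_mul, heig, smul_smul]
    congr 1
    push_cast; ring
  have hPA : ∀ k, P k * A = ((-(β * E k) : ℝ) : ℂ) • P k := by
    intro k
    rw [hA, Matrix.mul_smul, hPH, smul_smul]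
    congr 1
    push_cast; ring
  have hexpP : ∀ k, NormedSpace.exp A * P k = (Real.exp (-(β * E k)) : ℂ) • P k := by
    intro k
    rw [exp_mul_proj A (P k) _ (hAP k), ← Complex.ofReal_exp]
  have hPexp : ∀ k, P k * NormedSpace.exp A = (Real.exp (-(β * E k)) : ℂ) • P k := by
    intro k
    rw [proj_mul_exp A (P k) _ (hPA k), ← Complex.ofReal_exp]
  -- the partition function is a nonzero (positive real) number
  set r : ι → ℝ := fun k => ∑ a, ∑ b, Complex.normSq (P k b a) with hr
  have hPtr : ∀ k, (P k).trace = ((r k : ℝ) : ℂ) := by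
    intro k
    have h1 : (P k).trace = ((P k)ᴴ * P k).trace := by rw [hherm, hproj]
    rw [h1, hr]
    push_cast
    simp only [Matrix.trace, Matrix.diag, Matrix.mul_apply, Matrix.conjTranspose_apply]
    refine Finset.sum_congr rfl fun a _ => Finset.sum_congr rfl fun b _ => ?_
    rw [Complex.normSq_eq_conj_mul_self, Complex.star_def]
  have hr0 : ∀ k, 0 ≤ r k := by
    intro k
    exact Finset.sum_nonneg fun a _ => Finset.sum_nonneg fun b _ => Complex.normSq_nonneg _
  have hrsum : ∑ k, r k = (Fintype.card n : ℝ) := by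
    have h2 : ((∑ k, r k : ℝ) : ℂ) = ((Fintype.card n : ℝ) : ℂ) := by
      push_cast
      calc (∑ k, (r k : ℂ)) = ∑ k, (P k).trace := by
            refine Finset.sum_congr rfl fun k _ => (hPtr k).symm
        _ = (∑ k, P k).trace := (Matrix.trace_sum _ _).symm
        _ = (1 : Matrix n n ℂ).trace := by rw [hsum]
        _ = (Fintype.card n : ℂ) := Matrix.trace_one
    exact_mod_cast h2
  have hexists : ∃ k, 0 < r k := by
    by_contra hcon
    push_neg at hcon
    have : ∑ k, r k = 0 :=
      le_antisymm (Finset.sum_nonpos fun k _ => hcon k) (Finset.sum_nonneg fun k _ => hr0 k)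
    rw [hrsum] at this
    have := Fintype.card_pos (α := n)
    simp_all
  obtain ⟨k0, hk0⟩ := hexists
  have hcpos : 0 < ∑ k, Real.exp (-(β * E k)) * r k := by
    refine Finset.sum_pos' (fun k _ => mul_nonneg (Real.exp_pos _).le (hr0 k)) ?_
    exact ⟨k0, Finset.mem_univ _, mul_pos (Real.exp_pos _) hk0⟩
  have htr : (NormedSpace.exp A).trace
      = ((∑ k, Real.exp (-(β * E k)) * r k : ℝ) : ℂ) := by
    have hdecomp : NormedSpace.exp A = ∑ k, (Real.exp (-(β * E k)) : ℂ) • P k := by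
      calc NormedSpace.exp A = NormedSpace.exp A * 1 := (mul_one _).symm
        _ = NormedSpace.exp A * ∑ k, P k := by rw [hsum]
        _ = ∑ k, NormedSpace.exp A * P k := Finset.mul_sum _ _ _
        _ = ∑ k, (Real.exp (-(β * E k)) : ℂ) • P k :=
            Finset.sum_congr rfl fun k _ => hexpP k
    rw [hdecomp, Matrix.trace_sum]
    push_cast
    refine Finset.sum_congr rfl fun k _ => ?_
    rw [Matrix.trace_smul, hPtr, smul_eq_mul]
  have hcne : (NormedSpace.exp A).trace ≠ 0 := by
    rw [htr]
    exact_mod_cast hcpos.ne'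
  set c := (NormedSpace.exp A).trace with hc
  have hρP : ∀ k, ρ * P k = (c⁻¹ * (Real.exp (-(β * E k)) : ℂ)) • P k := by
    intro k
    rw [hρ, Matrix.smul_mul, hexpP, smul_smul]
  have hPρ : ∀ k, P k * ρ = (c⁻¹ * (Real.exp (-(β * E k)) : ℂ)) • P k := by
    intro k
    rw [hρ, Matrix.mul_smul, hPexp, smul_smul]
  have key := expSemigroup_db ρ L hdb t (P i) (P j)
  have l1 : (ρ * expSemigroup L t (P i) * P j).trace
      = c⁻¹ * ((Real.exp (-(β * E j)) : ℂ) * (P j * expSemigroup L t (P i)).trace) := by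
    rw [Matrix.trace_mul_cycle, hPρ j, Matrix.smul_mul, Matrix.trace_smul, smul_eq_mul,
      mul_assoc]
  have l2 : (ρ * P i * expSemigroup L t (P j)).trace
      = c⁻¹ * ((Real.exp (-(β * E i)) : ℂ) * (P i * expSemigroup L t (P j)).trace) := by
    rw [hρP i, Matrix.smul_mul, Matrix.trace_smul, smul_eq_mul, mul_assoc]
  rw [l1, l2] at key
  exact mul_left_cancel₀ (inv_ne_zero hcne) key
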